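/- For every automorphism g of the augmented cube graph AQ_4, either the image under g of every coset of U = {0000, 0010, 0001, 0011} is again a coset of U, or the image under g of every coset of U is a coset of L = {0000, 1000, 0111, 1111}. In particular, the set of four cosets of U is a block for the action of Aut(AQ_4) on the eight 4-cliques formed by the cosets of U and of L. -/

import Mathlib

/-- The standard basis vector `e_j` of `𝔽₂ⁿ`. -/
def stdBasis (n : ℕ) (j : Fin n) : Fin n → ZMod 2 := fun i => if i = j then 1 else 0

/-- The vector `v_k` of `𝔽₂ⁿ` having `1` in its last `k` coordinates and `0` elsewhere. -/
def lastOnes (n k : ℕ) : Fin n → ZMod 2 := fun i => if n - k ≤ i.val then 1 else 0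

/-- The generating set `S_n` of the augmented cube. -/
def genSet (n : ℕ) : Set (Fin n → ZMod 2) :=
  {x | (∃ j : Fin n, x = stdBasis n j) ∨ ∃ k : ℕ, 2 ≤ k ∧ k ≤ n ∧ x = lastOnes n k}

/-- The augmented cube graph `AQ_n`. -/
def AQ (n : ℕ) : SimpleGraph (Fin n → ZMod 2) where
  Adj x y := x ≠ y ∧ x + y ∈ genSet n
  symm := ⟨fun x y h => ⟨h.1.symm, by rw [add_comm]; exact h.2⟩⟩
  loopless := ⟨fun x h => h.1 rfl⟩

/-- The subgroup (upper clique) `U = {0000, 0010, 0001, 0011}` of `𝔽₂⁴`. -/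
def U : Set (Fin 4 → ZMod 2) := {![0,0,0,0], ![0,0,1,0], ![0,0,0,1], ![0,0,1,1]}

/-- The subgroup (lower clique) `L = {0000, 1000, 0111, 1111}` of `𝔽₂⁴`. -/
def L : Set (Fin 4 → ZMod 2) := {![0,0,0,0], ![1,0,0,0], ![0,1,1,1], ![1,1,1,1]}

/-- The subgroup (middle clique) `M = {0000, 0100, 0011, 0111}` of `𝔽₂⁴`. -/
def M : Set (Fin 4 → ZMod 2) := {![0,0,0,0], ![0,1,0,0], ![0,0,1,1], ![0,1,1,1]}

/-- The coset `K + z`. -/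
def coset (K : Set (Fin 4 → ZMod 2)) (z : Fin 4 → ZMod 2) : Set (Fin 4 → ZMod 2) :=
  (fun x => x + z) '' K

/-! ### Auxiliary machinery -/

abbrev V4 : Type := Fin 4 → ZMod 2

def genMem (x : V4) : Prop :=
  x = ![1,0,0,0] ∨ x = ![0,1,0,0] ∨ x = ![0,0,1,0] ∨ x = ![0,0,0,1] ∨
  x = ![0,0,1,1] ∨ x = ![0,1,1,1] ∨ x = ![1,1,1,1]

def Umem (x : V4) : Prop :=
  x = ![0,0,0,0] ∨ x = ![0,0,1,0] ∨ x = ![0,0,0,1] ∨ x = ![0,0,1,1]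

def Lmem (x : V4) : Prop :=
  x = ![0,0,0,0] ∨ x = ![1,0,0,0] ∨ x = ![0,1,1,1] ∨ x = ![1,1,1,1]

instance : DecidablePred genMem := fun x => by unfold genMem; infer_instance
instance : DecidablePred Umem := fun x => by unfold Umem; infer_instance
instance : DecidablePred Lmem := fun x => by unfold Lmem; infer_instance

def AdjD (x y : V4) : Prop := x ≠ y ∧ genMem (x + y)

instance (x y : V4) : Decidable (AdjD x y) := by unfold AdjD; infer_instance

lemma genSet_iff (x : V4) : x ∈ genSet 4 ↔ genMem x := by
  constructor
  · intro h
    simp only [genSet, Set.mem_setOf_eq] at h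
    rcases h with ⟨j, rfl⟩ | ⟨k, h2, h4, rfl⟩
    · exact (by decide : ∀ j : Fin 4, genMem (stdBasis 4 j)) j
    · interval_cases k <;> decide
  · intro h
    simp only [genSet, Set.mem_setOf_eq]
    rcases h with rfl | rfl | rfl | rfl | rfl | rfl | rfl
    · exact Or.inl ⟨0, by decide⟩
    · exact Or.inl ⟨1, by decide⟩
    · exact Or.inl ⟨2, by decide⟩
    · exact Or.inl ⟨3, by decide⟩
    · exact Or.inr ⟨2, by norm_num, by norm_num, by decide⟩
    · exact Or.inr ⟨3, by norm_num, by norm_num, by decide⟩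
    · exact Or.inr ⟨4, by norm_num, by norm_num, by decide⟩

lemma adj_iff (x y : V4) : (AQ 4).Adj x y ↔ AdjD x y :=
  and_congr Iff.rfl (genSet_iff (x + y))

/- small algebraic facts about `𝔽₂⁴` -/
lemma addself : ∀ x : V4, x + x = 0 := by decide
lemma sum4 (a b z : V4) : (a + z) + (b + z) = a + b := by linear_combination addself z
lemma sum4' (y a b : V4) : (y + a) + (y + b) = a + b := by linear_combination addself y
lemma midcancel (x a b : V4) : (x + a) + (a + b) = x + b := by linear_combination addself a
lemma midcancel2 (x a b : V4) : (x + b) + (a + b) = x + a := by linear_combination addself b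
lemma cancelz (u z : V4) : u + z + z = u := by linear_combination addself z
lemma addcancel (x y p : V4) (h : x + p = y + p) : x = y := by linear_combination h
lemma eq_of_add_eq_zero (x y : V4) (h : x + y = 0) : y = x := by
  linear_combination h - addself x

/- small decidable facts -/
lemma Uclosed : ∀ a b : V4, Umem a → Umem b → Umem (a + b) := by decide
lemma Uclique : ∀ a b : V4, Umem a → Umem b → a ≠ b → genMem (a + b) := by decide
lemma Ushift : ∀ y z : V4, Umem (y + z) ↔
    (y = z ∨ y = ![0,0,1,0] + z ∨ y = ![0,0,0,1] + z ∨ y = ![0,0,1,1] + z) := by decide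
lemma wAdj : ∀ z : V4, AdjD (![1,0,0,0] + z) z := by decide
lemma wNotAdj2 : ∀ z : V4, ¬ AdjD (![1,0,0,0] + z) (![0,0,1,0] + z) := by decide
lemma wNotAdj3 : ∀ z : V4, ¬ AdjD (![1,0,0,0] + z) (![0,0,0,1] + z) := by decide
lemma wNotAdj4 : ∀ z : V4, ¬ AdjD (![1,0,0,0] + z) (![0,0,1,1] + z) := by decide

lemma AdjD_shift (a b p : V4) : AdjD (a + p) (b + p) ↔ AdjD a b := by
  unfold AdjD
  have h : a + p = b + p ↔ a = b := ⟨addcancel a b p, fun h => by rw [h]⟩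
  rw [sum4]
  exact and_congr (not_congr h) Iff.rfl

lemma ULne1 : ∀ v : V4, ∃ x : V4, ¬(Umem x ↔ Lmem (x + v)) := by decide

lemma ULne (a b : V4) : ∃ x : V4, ¬(Umem (x + a) ↔ Lmem (x + b)) := by
  obtain ⟨x, hx⟩ := ULne1 (a + b)
  refine ⟨x + a, fun h => hx ?_⟩
  rwa [cancelz, add_assoc] at h

lemma ULmeet1 : ∀ v : V4, ∃ x : V4, Umem x ∧ Lmem (x + v) := by decide

lemma ULmeet (a b : V4) : ∃ x : V4, Umem (x + a) ∧ Lmem (x + b) := by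
  obtain ⟨x, hU, hL⟩ := ULmeet1 (a + b)
  refine ⟨x + a, by rwa [cancelz], by rwa [add_assoc]⟩

set_option maxHeartbeats 4000000 in
set_option synthInstance.maxHeartbeats 1000000 in
set_option synthInstance.maxSize 2000 in
/-- The key finite check: a 4-clique through `0` which has an outside vertex adjacent
to `0` but to no other clique vertex must be `U` or `L` (it cannot be `M`). -/
lemma clique0 : ∀ b : V4, AdjD 0 b → ∀ c : V4, AdjD 0 c → AdjD b c →
    ∀ d : V4, AdjD 0 d → AdjD b d → AdjD c d →
    ∀ w : V4, AdjD w 0 → ¬AdjD w b → ¬AdjD w c → ¬AdjD w d → w ≠ b → w ≠ c → w ≠ d →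
    ((∀ x : V4, (x = 0 ∨ x = b ∨ x = c ∨ x = d) ↔ Umem x) ∨
     (∀ x : V4, (x = 0 ∨ x = b ∨ x = c ∨ x = d) ↔ Lmem x)) := by decide

lemma mem_coset (K : Set V4) (x z : V4) : x ∈ coset K z ↔ x + z ∈ K := by
  constructor
  · rintro ⟨u, hu, rfl⟩; rwa [cancelz]
  · intro h; exact ⟨x + z, h, cancelz x z⟩

lemma memU_iff (x : V4) : x ∈ U ↔ Umem x := by
  simp [U, Umem, Set.mem_insert_iff, Set.mem_singleton_iff]

lemma memL_iff (x : V4) : x ∈ L ↔ Lmem x := by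
  simp [L, Lmem, Set.mem_insert_iff, Set.mem_singleton_iff]

lemma image_eq_coset (g : AQ 4 ≃g AQ 4) (z : V4) (K : Set V4)
    (hK : ∀ x : V4, x ∈ K ↔ (x = 0 ∨ x = g (![0,0,1,0] + z) + g z ∨
      x = g (![0,0,0,1] + z) + g z ∨ x = g (![0,0,1,1] + z) + g z)) :
    ⇑g '' coset U z = coset K (g z) := by
  ext x
  constructor
  · rintro ⟨y, hy, rfl⟩
    rw [mem_coset, memU_iff, Ushift] at hy
    rw [mem_coset, hK]
    rcases hy with rfl | rfl | rfl | rfl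
    · exact Or.inl (addself _)
    · exact Or.inr (Or.inl rfl)
    · exact Or.inr (Or.inr (Or.inl rfl))
    · exact Or.inr (Or.inr (Or.inr rfl))
  · intro hx
    rw [mem_coset, hK] at hx
    rcases hx with h | h | h | h
    · exact ⟨z, by rw [mem_coset, addself, memU_iff]; decide, eq_of_add_eq_zero _ _ h⟩
    · exact ⟨![0,0,1,0] + z, by rw [mem_coset, cancelz, memU_iff]; decide,
        (addcancel _ _ _ h).symm⟩
    · exact ⟨![0,0,0,1] + z, by rw [mem_coset, cancelz, memU_iff]; decide,
        (addcancel _ _ _ h).symm⟩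
    · exact ⟨![0,0,1,1] + z, by rw [mem_coset, cancelz, memU_iff]; decide,
        (addcancel _ _ _ h).symm⟩

lemma image_coset (g : AQ 4 ≃g AQ 4) (z : V4) :
    ⇑g '' coset U z = coset U (g z) ∨ ⇑g '' coset U z = coset L (g z) := by
  set p := g z with hp
  -- pairwise adjacency of the translated image clique
  have key : ∀ u1 u2 : V4, Umem u1 → Umem u2 → u1 ≠ u2 →
      AdjD (g (u1 + z) + p) (g (u2 + z) + p) := by
    intro u1 u2 h1 h2 hne
    have h3 : (AQ 4).Adj (u1 + z) (u2 + z) := by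
      rw [adj_iff]
      refine ⟨fun hEq => hne (addcancel _ _ _ hEq), ?_⟩
      rw [sum4]
      exact Uclique _ _ h1 h2 hne
    have h4 := (adj_iff _ _).mp (g.map_rel_iff.mpr h3)
    exact (AdjD_shift _ _ _).mpr h4
  have hz0 : (![0,0,0,0] : V4) + z = z := by
    have h : (![0,0,0,0] : V4) = 0 := by decide
    rw [h, zero_add]
  have h00 : g (![0,0,0,0] + z) + p = 0 := by rw [hz0, ← hp]; exact addself p
  -- the special outside vertex
  have hwadj : AdjD (g (![1,0,0,0] + z) + p) 0 := by
    have h1 : (AQ 4).Adj (![1,0,0,0] + z) z := (adj_iff _ _).mpr (wAdj z)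
    have h2 := (adj_iff _ _).mp (g.map_rel_iff.mpr h1)
    have h3 := (AdjD_shift (g (![1,0,0,0] + z)) (g z) p).mpr h2
    rwa [← hp, addself p] at h3
  have hwnot : ∀ u : V4, ¬ AdjD (![1,0,0,0] + z) (u + z) →
      ¬ AdjD (g (![1,0,0,0] + z) + p) (g (u + z) + p) := by
    intro u hu h
    exact hu ((adj_iff _ _).mp (g.map_rel_iff.mp ((adj_iff _ _).mpr
      ((AdjD_shift _ _ _).mp h))))
  have hwne : ∀ u : V4, (![1,0,0,0] : V4) ≠ u →
      g (![1,0,0,0] + z) + p ≠ g (u + z) + p := by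
    intro u hu h
    exact hu (addcancel _ _ _ (g.injective (addcancel _ _ _ h)))
  have hb := key ![0,0,0,0] ![0,0,1,0] (by decide) (by decide) (by decide)
  have hc := key ![0,0,0,0] ![0,0,0,1] (by decide) (by decide) (by decide)
  have hd := key ![0,0,0,0] ![0,0,1,1] (by decide) (by decide) (by decide)
  rw [h00] at hb hc hd
  rcases clique0 (g (![0,0,1,0] + z) + p) hb
      (g (![0,0,0,1] + z) + p) hc
      (key ![0,0,1,0] ![0,0,0,1] (by decide) (by decide) (by decide))
      (g (![0,0,1,1] + z) + p) hd
      (key ![0,0,1,0] ![0,0,1,1] (by decide) (by decide) (by decide))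
      (key ![0,0,0,1] ![0,0,1,1] (by decide) (by decide) (by decide))
      (g (![1,0,0,0] + z) + p) hwadj
      (hwnot _ (wNotAdj2 z)) (hwnot _ (wNotAdj3 z)) (hwnot _ (wNotAdj4 z))
      (hwne _ (by decide)) (hwne _ (by decide)) (hwne _ (by decide)) with H | H
  · exact Or.inl (image_eq_coset g z U fun x => (memU_iff x).trans (H x).symm)
  · exact Or.inr (image_eq_coset g z L fun x => (memL_iff x).trans (H x).symm)

lemma no_mix (g : AQ 4 ≃g AQ 4) (z1 z2 w1 w2 : V4)
    (h1 : ⇑g '' coset U z1 = coset U w1) (h2 : ⇑g '' coset U z2 = coset L w2) :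
    False := by
  by_cases hz : Umem (z1 + z2)
  · have hc : coset U z1 = coset U z2 := by
      ext x
      rw [mem_coset, mem_coset, memU_iff, memU_iff]
      constructor
      · intro h
        have h' := Uclosed _ _ h hz
        rwa [midcancel] at h'
      · intro h
        have h' := Uclosed _ _ h hz
        rwa [midcancel2] at h'
    rw [hc, h2] at h1
    obtain ⟨x, hx⟩ := ULne w1 w2
    apply hx
    rw [← memU_iff, ← mem_coset, ← h1, mem_coset, memL_iff]
  · obtain ⟨x, hxU, hxL⟩ := ULmeet w1 w2
    have hx1 : x ∈ ⇑g '' coset U z1 := by rw [h1, mem_coset, memU_iff]; exact hxU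
    have hx2 : x ∈ ⇑g '' coset U z2 := by rw [h2, mem_coset, memL_iff]; exact hxL
    obtain ⟨y1, hy1, he1⟩ := hx1
    obtain ⟨y2, hy2, he2⟩ := hx2
    have hy : y1 = y2 := g.injective (he1.trans he2.symm)
    subst hy
    rw [mem_coset, memU_iff] at hy1 hy2
    apply hz
    have h' := Uclosed _ _ hy1 hy2
    rwa [sum4'] at h'

/-- Every automorphism of `AQ_4` either maps every coset of `U` to a coset of
`U`, or maps every coset of `U` to a coset of `L`; i.e. the set of cosets of
`U` is a block of the action of `Aut(AQ_4)` on the eight 4-cliques given by the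
cosets of `U` and of `L`. -/
theorem AQ4_upper_cliques_block (g : AQ 4 ≃g AQ 4) :
    (∀ z : Fin 4 → ZMod 2, ∃ w, ⇑g '' coset U z = coset U w) ∨
    (∀ z : Fin 4 → ZMod 2, ∃ w, ⇑g '' coset U z = coset L w) := by
  rcases image_coset g 0 with h0 | h0
  · left
    intro z
    rcases image_coset g z with h | h
    · exact ⟨g z, h⟩
    · exact (no_mix g 0 z (g 0) (g z) h0 h).elim
  · right
    intro z
    rcases image_coset g z with h | h
    · exact (no_mix g z 0 (g z) (g 0) h h0).elim
    · exact ⟨g z, h⟩
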